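/- arXiv:1604.04475 — 10 statements merged into one kernel-verified Lean document; each statement's English description precedes it below -/
import Mathlib

section
/- Let A be a vector space with a trilinear bracket [.,.,.] satisfying the third 3-Leibniz identity: [x1,x2,[y1,y2,y3]] = [[x1,x2,y1],y2,y3] + [y1,[x1,x2,y2],y3] + [y1,y2,[x1,x2,y3]]. Then the space g = A ⊗ A with the bracket [x1⊗x2, y1⊗y2] := [x1,x2,y1]⊗y2 + y1⊗[x1,x2,y2] is a left Leibniz algebra, i.e. [X,[Y,Z]] = [[X,Y],Z] + [Y,[X,Z]] for all X,Y,Z in g. -/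
open TensorProduct

set_option maxRecDepth 4000

/-- If a trilinear bracket on `A` satisfies the third 3-Leibniz identity,
then `A ⊗ A` with the bracket `[x1⊗x2, y1⊗y2] = [x1,x2,y1]⊗y2 + y1⊗[x1,x2,y2]`
is a left Leibniz algebra. -/
theorem third_3Leibniz_associated_left_Leibniz
    {K A : Type*} [Field K] [AddCommGroup A] [Module K A]
    (f : A →ₗ[K] A →ₗ[K] A →ₗ[K] A)
    (h3 : ∀ x1 x2 y1 y2 y3 : A,
      f x1 x2 (f y1 y2 y3) =
        f (f x1 x2 y1) y2 y3 + f y1 (f x1 x2 y2) y3 + f y1 y2 (f x1 x2 y3)) :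
    ∃ B : (A ⊗[K] A) →ₗ[K] (A ⊗[K] A) →ₗ[K] (A ⊗[K] A),
      (∀ x1 x2 y1 y2 : A,
        B (x1 ⊗ₜ[K] x2) (y1 ⊗ₜ[K] y2) =
          (f x1 x2 y1) ⊗ₜ[K] y2 + y1 ⊗ₜ[K] (f x1 x2 y2)) ∧
      (∀ X Y Z : A ⊗[K] A, B X (B Y Z) = B (B X Y) Z + B Y (B X Z)) := by
  -- for fixed x1 x2, the derivation on A ⊗ A
  let D : A →ₗ[K] A →ₗ[K] (A ⊗[K] A) →ₗ[K] (A ⊗[K] A) :=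
    LinearMap.mk₂ K
      (fun x1 x2 => TensorProduct.map (f x1 x2) LinearMap.id
        + TensorProduct.map LinearMap.id (f x1 x2))
      (by intro a b c; ext y1 y2; simp [TensorProduct.add_tmul, TensorProduct.tmul_add]; abel)
      (by intro c a b; ext y1 y2; simp [TensorProduct.smul_tmul', smul_add])
      (by intro a b c; ext y1 y2; simp [TensorProduct.add_tmul, TensorProduct.tmul_add]; abel)
      (by intro c a b; ext y1 y2; simp [TensorProduct.smul_tmul', smul_add])
  have hB : ∀ x1 x2 y1 y2 : A,
      TensorProduct.lift D (x1 ⊗ₜ[K] x2) (y1 ⊗ₜ[K] y2) =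
        (f x1 x2 y1) ⊗ₜ[K] y2 + y1 ⊗ₜ[K] (f x1 x2 y2) := by
    intro x1 x2 y1 y2; simp [D]
  refine ⟨TensorProduct.lift D, hB, ?_⟩
  · intro X Y Z
    induction X using TensorProduct.induction_on with
    | zero => simp
    | add X1 X2 h1 h2 =>
      simp only [map_add, LinearMap.add_apply, h1, h2]; abel
    | tmul x1 x2 =>
      induction Y using TensorProduct.induction_on with
      | zero => simp
      | add Y1 Y2 h1 h2 =>
        simp only [map_add, LinearMap.add_apply, h1, h2]; abel
      | tmul y1 y2 =>
        induction Z using TensorProduct.induction_on with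
        | zero => simp
        | add Z1 Z2 h1 h2 =>
          simp only [map_add, LinearMap.add_apply, h1, h2]; abel
        | tmul z1 z2 =>
          rw [hB y1 y2 z1 z2, map_add, hB, hB, hB x1 x2 y1 y2, hB x1 x2 z1 z2,
            map_add (TensorProduct.lift D), LinearMap.add_apply, hB, hB,
            map_add, hB, hB]
          rw [h3 x1 x2 y1 y2 z1, h3 x1 x2 y1 y2 z2, TensorProduct.add_tmul,
            TensorProduct.add_tmul, TensorProduct.tmul_add, TensorProduct.tmul_add]
          abel
end

section
/- Let A be a vector space with a trilinear bracket satisfying the first 3-Leibniz identity: [[y1,y2,y3],x2,x3] = [[y1,x2,x3],y2,y3] + [y1,[y2,x2,x3],y3] + [y1,y2,[y3,x2,x3]]. Then g = A ⊗ A with the bracket [x1⊗x2, y1⊗y2] := [x1,y1,y2]⊗x2 + x1⊗[x2,y1,y2] is a right Leibniz algebra, i.e. [[X,Y],Z] = [[X,Z],Y] + [X,[Y,Z]] for all X,Y,Z. -/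
open TensorProduct

/-- If a trilinear bracket on `A` satisfies the first 3-Leibniz identity,
then `A ⊗ A` with the bracket `[x1⊗x2, y1⊗y2] = [x1,y1,y2]⊗x2 + x1⊗[x2,y1,y2]`
is a right Leibniz algebra. -/
theorem first_3Leibniz_associated_right_Leibniz
    {K A : Type*} [Field K] [AddCommGroup A] [Module K A]
    (f : A →ₗ[K] A →ₗ[K] A →ₗ[K] A)
    (h1 : ∀ y1 y2 y3 x2 x3 : A,
      f (f y1 y2 y3) x2 x3 =
        f (f y1 x2 x3) y2 y3 + f y1 (f y2 x2 x3) y3 + f y1 y2 (f y3 x2 x3)) :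
    ∃ B : (A ⊗[K] A) →ₗ[K] (A ⊗[K] A) →ₗ[K] (A ⊗[K] A),
      (∀ x1 x2 y1 y2 : A,
        B (x1 ⊗ₜ[K] x2) (y1 ⊗ₜ[K] y2) =
          (f x1 y1 y2) ⊗ₜ[K] x2 + x1 ⊗ₜ[K] (f x2 y1 y2)) ∧
      (∀ X Y Z : A ⊗[K] A, B (B X Y) Z = B (B X Z) Y + B X (B Y Z)) := by
  -- D g = g ⊗ id + id ⊗ g as a linear map in g
  let D : (A →ₗ[K] A) →ₗ[K] (A ⊗[K] A →ₗ[K] A ⊗[K] A) :=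
    LinearMap.rTensorHom A + LinearMap.lTensorHom A
  -- the map (y1, y2) ↦ (x ↦ f x y1 y2)
  let C : A →ₗ[K] A →ₗ[K] (A ⊗[K] A →ₗ[K] A ⊗[K] A) :=
    LinearMap.mk₂ K (fun y1 y2 => D ((f.flip y1).flip y2))
      (by intro a b c; ext x y; simp [D, TensorProduct.add_tmul, TensorProduct.tmul_add, TensorProduct.smul_tmul]; try abel)
      (by intro r a b; ext x y; simp [D, TensorProduct.add_tmul, TensorProduct.tmul_add, TensorProduct.smul_tmul]; try abel)
      (by intro a b c; ext x y; simp [D, TensorProduct.add_tmul, TensorProduct.tmul_add, TensorProduct.smul_tmul]; try abel)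
      (by intro r a b; ext x y; simp [D, TensorProduct.add_tmul, TensorProduct.tmul_add, TensorProduct.smul_tmul]; try abel)
  let B : (A ⊗[K] A) →ₗ[K] (A ⊗[K] A) →ₗ[K] (A ⊗[K] A) :=
    (TensorProduct.lift C).flip
  have hB : ∀ x1 x2 y1 y2 : A,
      B (x1 ⊗ₜ[K] x2) (y1 ⊗ₜ[K] y2) =
        (f x1 y1 y2) ⊗ₜ[K] x2 + x1 ⊗ₜ[K] (f x2 y1 y2) := by
    intro x1 x2 y1 y2
    simp [B, C, D, LinearMap.rTensor, LinearMap.lTensor, TensorProduct.map_tmul]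
  refine ⟨B, hB, ?_⟩
  intro X Y Z
  induction X using TensorProduct.induction_on with
  | zero => simp
  | add X1 X2 ih1 ih2 => simp only [map_add, LinearMap.add_apply, ih1, ih2]; abel
  | tmul x1 x2 =>
    induction Y using TensorProduct.induction_on with
    | zero => simp
    | add Y1 Y2 ih1 ih2 => simp only [map_add, LinearMap.add_apply, ih1, ih2]; abel
    | tmul y1 y2 =>
      induction Z using TensorProduct.induction_on with
      | zero => simp
      | add Z1 Z2 ih1 ih2 => simp only [map_add, LinearMap.add_apply, ih1, ih2]; abel
      | tmul z1 z2 =>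
        simp only [hB, map_add, LinearMap.add_apply]
        rw [h1 x1 y1 y2 z1 z2, h1 x2 y1 y2 z1 z2]
        simp only [hB, TensorProduct.add_tmul, TensorProduct.tmul_add]
        abel
end

section
/- Let A be a vector space with a trilinear bracket satisfying the second 3-Leibniz identity: [x1,[y1,y2,y3],x3] = [[x1,y1,x3],y2,y3] + [y1,[x1,y2,x3],y3] + [y1,y2,[x1,y3,x3]]. Then g = A ⊗ A with the bracket [x1⊗x2, y1⊗y2] := [x1,y1,x2]⊗y2 + y1⊗[x1,y2,x2] is a left Leibniz algebra. -/
open TensorProduct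

/-- If a trilinear bracket on `A` satisfies the second 3-Leibniz identity,
then `A ⊗ A` with the bracket `[x1⊗x2, y1⊗y2] = [x1,y1,x2]⊗y2 + y1⊗[x1,y2,x2]`
is a left Leibniz algebra. -/
theorem second_3Leibniz_associated_left_Leibniz
    {K A : Type*} [Field K] [AddCommGroup A] [Module K A]
    (f : A →ₗ[K] A →ₗ[K] A →ₗ[K] A)
    (h2 : ∀ x1 y1 y2 y3 x3 : A,
      f x1 (f y1 y2 y3) x3 =
        f (f x1 y1 x3) y2 y3 + f y1 (f x1 y2 x3) y3 + f y1 y2 (f x1 y3 x3)) :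
    ∃ B : (A ⊗[K] A) →ₗ[K] (A ⊗[K] A) →ₗ[K] (A ⊗[K] A),
      (∀ x1 x2 y1 y2 : A,
        B (x1 ⊗ₜ[K] x2) (y1 ⊗ₜ[K] y2) =
          (f x1 y1 x2) ⊗ₜ[K] y2 + y1 ⊗ₜ[K] (f x1 y2 x2)) ∧
      (∀ X Y Z : A ⊗[K] A, B X (B Y Z) = B (B X Y) Z + B Y (B X Z)) := by
  set B : (A ⊗[K] A) →ₗ[K] (A ⊗[K] A) →ₗ[K] (A ⊗[K] A) :=
    TensorProduct.lift (LinearMap.mk₂ K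
      (fun x1 x2 => LinearMap.rTensor A ((f x1).flip x2) +
        LinearMap.lTensor A ((f x1).flip x2))
      (by intro x x' y
          rw [map_add]
          have h : (f x + f x').flip y = (f x).flip y + (f x').flip y := by ext z; simp
          rw [h, LinearMap.rTensor_add, LinearMap.lTensor_add]; abel)
      (by intro c x y
          rw [map_smul]
          have h : (c • f x).flip y = c • ((f x).flip y) := by ext z; simp
          rw [h, LinearMap.rTensor_smul, LinearMap.lTensor_smul]; module)
      (by intro x y y'
          have h : (f x).flip (y + y') = (f x).flip y + (f x).flip y' := by ext z; simp
          rw [h, LinearMap.rTensor_add, LinearMap.lTensor_add]; abel)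
      (by intro c x y
          have h : (f x).flip (c • y) = c • ((f x).flip y) := by ext z; simp
          rw [h, LinearMap.rTensor_smul, LinearMap.lTensor_smul]; module))
    with hBdef
  have hB : ∀ x1 x2 y1 y2 : A,
      B (x1 ⊗ₜ[K] x2) (y1 ⊗ₜ[K] y2) =
        (f x1 y1 x2) ⊗ₜ[K] y2 + y1 ⊗ₜ[K] (f x1 y2 x2) := by
    intro x1 x2 y1 y2
    simp [hBdef, LinearMap.rTensor_tmul, LinearMap.lTensor_tmul]
  refine ⟨B, hB, ?_⟩
  intro X Y Z
  induction X using TensorProduct.induction_on with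
  | zero => simp
  | add X X' hX hX' => simp [map_add, hX, hX']; abel
  | tmul x1 x2 =>
    induction Y using TensorProduct.induction_on with
    | zero => simp
    | add Y Y' hY hY' => simp [map_add, hY, hY']; abel
    | tmul y1 y2 =>
      induction Z using TensorProduct.induction_on with
      | zero => simp
      | add Z Z' hZ hZ' => simp [map_add, hZ, hZ']; abel
      | tmul z1 z2 =>
        simp only [hB, map_add, LinearMap.add_apply, tmul_add, add_tmul]
        rw [h2 x1 y1 z1 y2 x2, h2 x1 y1 z2 y2 x2]
        simp only [add_tmul, tmul_add]
        abel
end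

section
/- Let A be a vector space with a trilinear bracket satisfying the second 3-Leibniz identity: [x1,[y1,y2,y3],x3] = [[x1,y1,x3],y2,y3] + [y1,[x1,y2,x3],y3] + [y1,y2,[x1,y3,x3]]. Then g = A ⊗ A with the bracket [x1⊗x2, y1⊗y2] := [y1,x1,y2]⊗x2 + x1⊗[y1,x2,y2] is a right Leibniz algebra. -/
open TensorProduct

/-- If a trilinear bracket on `A` satisfies the second 3-Leibniz identity,
then `A ⊗ A` with the bracket `[x1⊗x2, y1⊗y2] = [y1,x1,y2]⊗x2 + x1⊗[y1,x2,y2]`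
is a right Leibniz algebra. -/
theorem second_3Leibniz_associated_right_Leibniz
    {K A : Type*} [Field K] [AddCommGroup A] [Module K A]
    (f : A →ₗ[K] A →ₗ[K] A →ₗ[K] A)
    (h2 : ∀ x1 y1 y2 y3 x3 : A,
      f x1 (f y1 y2 y3) x3 =
        f (f x1 y1 x3) y2 y3 + f y1 (f x1 y2 x3) y3 + f y1 y2 (f x1 y3 x3)) :
    ∃ B : (A ⊗[K] A) →ₗ[K] (A ⊗[K] A) →ₗ[K] (A ⊗[K] A),
      (∀ x1 x2 y1 y2 : A,
        B (x1 ⊗ₜ[K] x2) (y1 ⊗ₜ[K] y2) =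
          (f y1 x1 y2) ⊗ₜ[K] x2 + x1 ⊗ₜ[K] (f y1 x2 y2)) ∧
      (∀ X Y Z : A ⊗[K] A, B (B X Y) Z = B (B X Z) Y + B X (B Y Z)) := by
  classical
  -- D y1 y2 : the operator X ↦ [X, y1⊗y2]
  set D : A →ₗ[K] A →ₗ[K] (A ⊗[K] A →ₗ[K] A ⊗[K] A) :=
    LinearMap.mk₂ K
      (fun y1 y2 => LinearMap.rTensor A ((f y1).flip y2) + LinearMap.lTensor A ((f y1).flip y2))
      (by intro a b c; apply TensorProduct.ext'; intro m n
          simp [TensorProduct.add_tmul, TensorProduct.tmul_add]; abel)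
      (by intro c a b; apply TensorProduct.ext'; intro m n
          simp [TensorProduct.smul_tmul', TensorProduct.tmul_smul])
      (by intro a b c; apply TensorProduct.ext'; intro m n
          simp [TensorProduct.add_tmul, TensorProduct.tmul_add]; abel)
      (by intro c a b; apply TensorProduct.ext'; intro m n
          simp [TensorProduct.smul_tmul', TensorProduct.tmul_smul])
    with hD
  set B : (A ⊗[K] A) →ₗ[K] (A ⊗[K] A) →ₗ[K] (A ⊗[K] A) := (TensorProduct.lift D).flip with hBdef
  have hB : ∀ x1 x2 y1 y2 : A,
      B (x1 ⊗ₜ[K] x2) (y1 ⊗ₜ[K] y2) =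
        (f y1 x1 y2) ⊗ₜ[K] x2 + x1 ⊗ₜ[K] (f y1 x2 y2) := by
    intro x1 x2 y1 y2
    simp [hBdef, hD, TensorProduct.lift.tmul]
  refine ⟨B, hB, ?_⟩
  have key : ∀ x1 x2 y1 y2 z1 z2 : A,
      B (B (x1 ⊗ₜ[K] x2) (y1 ⊗ₜ[K] y2)) (z1 ⊗ₜ[K] z2) =
        B (B (x1 ⊗ₜ[K] x2) (z1 ⊗ₜ[K] z2)) (y1 ⊗ₜ[K] y2) +
        B (x1 ⊗ₜ[K] x2) (B (y1 ⊗ₜ[K] y2) (z1 ⊗ₜ[K] z2)) := by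
    intro x1 x2 y1 y2 z1 z2
    simp only [hB, map_add, LinearMap.add_apply]
    rw [h2 z1 y1 x1 y2 z2, h2 z1 y1 x2 y2 z2]
    simp only [map_add, LinearMap.add_apply, TensorProduct.add_tmul, TensorProduct.tmul_add]
    abel
  intro X Y Z
  induction X using TensorProduct.induction_on with
  | zero => simp
  | add X1 X2 h1 h2 => simp only [map_add, LinearMap.add_apply, h1, h2]; abel
  | tmul x1 x2 =>
    induction Y using TensorProduct.induction_on with
    | zero => simp
    | add Y1 Y2 h1 h2 => simp only [map_add, LinearMap.add_apply, h1, h2]; abel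
    | tmul y1 y2 =>
      induction Z using TensorProduct.induction_on with
      | zero => simp
      | add Z1 Z2 h1 h2 => simp only [map_add, LinearMap.add_apply, h1, h2]; abel
      | tmul z1 z2 => exact key x1 x2 y1 y2 z1 z2
end

section
/- Let A be a 3-Lie algebra and let ρᵢ: A×A → End(Vᵢ), i = 1,2,3, be representations of A. Define ρ: A×A → End(V1⊗V2⊗V3) by ρ(x1,x2)(v1⊗v2⊗v3) = ρ1(x1,x2)v1⊗v2⊗v3 + v1⊗ρ2(x1,x2)v2⊗v3 + v1⊗v2⊗ρ3(x1,x2)v3. Then ρ satisfies the identity [ρ(x1,x2), ρ(y1,y2)] = ρ([x1,x2,y1], y2) + ρ(y1, [x1,x2,y2]); i.e., ρ is a semi-representation of A on V1⊗V2⊗V3. -/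
open TensorProduct

/-- The diagonal tensor product of three representations of a 3-Lie
algebra is a semi-representation on `V1 ⊗ V2 ⊗ V3`, i.e. it satisfies the first
Kasymov identity. -/
theorem tensor_of_representations_is_semi_representation
    {K A V1 V2 V3 : Type*} [Field K] [AddCommGroup A] [Module K A]
    [AddCommGroup V1] [Module K V1] [AddCommGroup V2] [Module K V2]
    [AddCommGroup V3] [Module K V3]
    (f : A →ₗ[K] A →ₗ[K] A →ₗ[K] A)
    (halt1 : ∀ x y : A, f x x y = 0)
    (halt2 : ∀ x y : A, f x y y = 0)
    (hfil : ∀ x1 x2 y1 y2 y3 : A,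
      f x1 x2 (f y1 y2 y3) =
        f (f x1 x2 y1) y2 y3 + f y1 (f x1 x2 y2) y3 + f y1 y2 (f x1 x2 y3))
    (ρ1 : A →ₗ[K] A →ₗ[K] (V1 →ₗ[K] V1))
    (ρ2 : A →ₗ[K] A →ₗ[K] (V2 →ₗ[K] V2))
    (ρ3 : A →ₗ[K] A →ₗ[K] (V3 →ₗ[K] V3))
    (h1skew : ∀ x y : A, ρ1 x y = - ρ1 y x)
    (h2skew : ∀ x y : A, ρ2 x y = - ρ2 y x)
    (h3skew : ∀ x y : A, ρ3 x y = - ρ3 y x)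
    (h1a : ∀ x1 x2 y1 y2 : A,
      ρ1 x1 x2 ∘ₗ ρ1 y1 y2 - ρ1 y1 y2 ∘ₗ ρ1 x1 x2 =
        ρ1 (f x1 x2 y1) y2 + ρ1 y1 (f x1 x2 y2))
    (h2a : ∀ x1 x2 y1 y2 : A,
      ρ2 x1 x2 ∘ₗ ρ2 y1 y2 - ρ2 y1 y2 ∘ₗ ρ2 x1 x2 =
        ρ2 (f x1 x2 y1) y2 + ρ2 y1 (f x1 x2 y2))
    (h3a : ∀ x1 x2 y1 y2 : A,
      ρ3 x1 x2 ∘ₗ ρ3 y1 y2 - ρ3 y1 y2 ∘ₗ ρ3 x1 x2 =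
        ρ3 (f x1 x2 y1) y2 + ρ3 y1 (f x1 x2 y2))
    (h1b : ∀ x1 y1 y2 y3 : A,
      ρ1 x1 (f y1 y2 y3) =
        ρ1 y2 y3 ∘ₗ ρ1 x1 y1 - ρ1 y1 y3 ∘ₗ ρ1 x1 y2 + ρ1 y1 y2 ∘ₗ ρ1 x1 y3)
    (h2b : ∀ x1 y1 y2 y3 : A,
      ρ2 x1 (f y1 y2 y3) =
        ρ2 y2 y3 ∘ₗ ρ2 x1 y1 - ρ2 y1 y3 ∘ₗ ρ2 x1 y2 + ρ2 y1 y2 ∘ₗ ρ2 x1 y3)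
    (h3b : ∀ x1 y1 y2 y3 : A,
      ρ3 x1 (f y1 y2 y3) =
        ρ3 y2 y3 ∘ₗ ρ3 x1 y1 - ρ3 y1 y3 ∘ₗ ρ3 x1 y2 + ρ3 y1 y2 ∘ₗ ρ3 x1 y3) :
    ∃ R : A →ₗ[K] A →ₗ[K]
        ((V1 ⊗[K] (V2 ⊗[K] V3)) →ₗ[K] (V1 ⊗[K] (V2 ⊗[K] V3))),
      (∀ (x1 x2 : A) (v1 : V1) (v2 : V2) (v3 : V3),
        R x1 x2 (v1 ⊗ₜ[K] (v2 ⊗ₜ[K] v3)) =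
          (ρ1 x1 x2 v1) ⊗ₜ[K] (v2 ⊗ₜ[K] v3) + v1 ⊗ₜ[K] ((ρ2 x1 x2 v2) ⊗ₜ[K] v3)
            + v1 ⊗ₜ[K] (v2 ⊗ₜ[K] (ρ3 x1 x2 v3))) ∧
      (∀ x1 x2 y1 y2 : A,
        R x1 x2 ∘ₗ R y1 y2 - R y1 y2 ∘ₗ R x1 x2 =
          R (f x1 x2 y1) y2 + R y1 (f x1 x2 y2)) := by
  refine ⟨LinearMap.mk₂ K (fun x1 x2 =>
      LinearMap.rTensor (V2 ⊗[K] V3) (ρ1 x1 x2) +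
      LinearMap.lTensor V1 (LinearMap.rTensor V3 (ρ2 x1 x2) +
        LinearMap.lTensor V2 (ρ3 x1 x2)))
    (fun a b c => by simp [map_add, LinearMap.rTensor_add, LinearMap.lTensor_add]; abel)
    (fun s a b => by simp [map_smul, LinearMap.rTensor_smul, LinearMap.lTensor_smul])
    (fun a b c => by simp [map_add, LinearMap.rTensor_add, LinearMap.lTensor_add]; abel)
    (fun s a b => by simp [map_smul, LinearMap.rTensor_smul, LinearMap.lTensor_smul]),
    ?_, ?_⟩
  · intro x1 x2 v1 v2 v3
    simp [tmul_add, add_assoc]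
  · intro x1 x2 y1 y2
    have e1 := fun v1 => congrArg (fun g => g v1) (h1a x1 x2 y1 y2)
    have e2 := fun v2 => congrArg (fun g => g v2) (h2a x1 x2 y1 y2)
    have e3 := fun v3 => congrArg (fun g => g v3) (h3a x1 x2 y1 y2)
    simp only [LinearMap.sub_apply, LinearMap.comp_apply, LinearMap.add_apply] at e1 e2 e3
    ext v1 v2 v3
    simp only [LinearMap.mk₂_apply, LinearMap.sub_apply, LinearMap.comp_apply,
      LinearMap.add_apply, LinearMap.rTensor_tmul, LinearMap.lTensor_tmul,
      AlgebraTensorModule.curry_apply, curry_apply, LinearMap.coe_restrictScalars,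
      LinearMap.compr₂_apply, TensorProduct.mk_apply, map_add, tmul_add, add_tmul]
    rw [eq_add_of_sub_eq (e1 v1), eq_add_of_sub_eq (e2 v2), eq_add_of_sub_eq (e3 v3)]
    simp only [tmul_add, add_tmul]
    abel
end

section
/- In general, the diagonal tensor product action of a 3-Lie algebra representation fails to be a full representation: there exists a 3-Lie algebra A with representations ρᵢ on Vᵢ such that the induced semi-representation ρ on V1⊗V2⊗V3 does not satisfy ρ(x1,[y1,y2,y3]) = ρ(y2,y3)ρ(x1,y1) − ρ(y1,y3)ρ(x1,y2) + ρ(y1,y2)ρ(x1,y3). -/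
open TensorProduct

abbrev M4 : Type := Fin 4 → ℝ
abbrev T3 : Type := M4 ⊗[ℝ] (M4 ⊗[ℝ] M4)

def cr (x y z : M4) : M4 :=
  ![ -(x 1*(y 2*z 3 - y 3*z 2) - x 2*(y 1*z 3 - y 3*z 1) + x 3*(y 1*z 2 - y 2*z 1)),
     (x 0*(y 2*z 3 - y 3*z 2) - x 2*(y 0*z 3 - y 3*z 0) + x 3*(y 0*z 2 - y 2*z 0)),
    -(x 0*(y 1*z 3 - y 3*z 1) - x 1*(y 0*z 3 - y 3*z 0) + x 3*(y 0*z 1 - y 1*z 0)),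
     (x 0*(y 1*z 2 - y 2*z 1) - x 1*(y 0*z 2 - y 2*z 0) + x 2*(y 0*z 1 - y 1*z 0))]

lemma cr_add1 (a b y z : M4) : cr (a+b) y z = cr a y z + cr b y z := by
  funext l; fin_cases l <;> simp [cr] <;> ring
lemma cr_smul1 (c : ℝ) (a y z : M4) : cr (c • a) y z = c • cr a y z := by
  funext l; fin_cases l <;> simp [cr] <;> ring
lemma cr_add2 (x a b z : M4) : cr x (a+b) z = cr x a z + cr x b z := by
  funext l; fin_cases l <;> simp [cr] <;> ring
lemma cr_smul2 (c : ℝ) (x a z : M4) : cr x (c • a) z = c • cr x a z := by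
  funext l; fin_cases l <;> simp [cr] <;> ring
lemma cr_add3 (x y a b : M4) : cr x y (a+b) = cr x y a + cr x y b := by
  funext l; fin_cases l <;> simp [cr] <;> ring
lemma cr_smul3 (c : ℝ) (x y a : M4) : cr x y (c • a) = c • cr x y a := by
  funext l; fin_cases l <;> simp [cr] <;> ring

def trc : M4 →ₗ[ℝ] M4 →ₗ[ℝ] M4 →ₗ[ℝ] M4 where
  toFun x :=
  { toFun := fun y => ⟨⟨cr x y, cr_add3 x y⟩, fun c a => cr_smul3 c x y a⟩
    map_add' := fun a b => LinearMap.ext fun z => cr_add2 x a b z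
    map_smul' := fun c a => LinearMap.ext fun z => cr_smul2 c x a z }
  map_add' := fun a b => LinearMap.ext fun y => LinearMap.ext fun z => cr_add1 a b y z
  map_smul' := fun c a => LinearMap.ext fun y => LinearMap.ext fun z => cr_smul1 c a y z

@[simp] lemma trc_apply (x y z : M4) : trc x y z = cr x y z := rfl

noncomputable def Φ : (M4 →ₗ[ℝ] M4) →ₗ[ℝ] (T3 →ₗ[ℝ] T3) :=
  LinearMap.rTensorHom (M4 ⊗[ℝ] M4) +
  (LinearMap.lTensorHom M4).comp (LinearMap.rTensorHom M4) +
  (LinearMap.lTensorHom M4).comp (LinearMap.lTensorHom M4)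

noncomputable def Rmap : M4 →ₗ[ℝ] M4 →ₗ[ℝ] (T3 →ₗ[ℝ] T3) := trc.compr₂ Φ

lemma Rmap_tmul (x1 x2 v1 v2 v3 : M4) :
    Rmap x1 x2 (v1 ⊗ₜ[ℝ] (v2 ⊗ₜ[ℝ] v3)) =
      (cr x1 x2 v1) ⊗ₜ[ℝ] (v2 ⊗ₜ[ℝ] v3) + v1 ⊗ₜ[ℝ] ((cr x1 x2 v2) ⊗ₜ[ℝ] v3)
        + v1 ⊗ₜ[ℝ] (v2 ⊗ₜ[ℝ] (cr x1 x2 v3)) := by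
  simp [Rmap, Φ, LinearMap.rTensorHom, LinearMap.lTensorHom, LinearMap.rTensor_tmul,
    LinearMap.lTensor_tmul]

noncomputable def φ : T3 →ₗ[ℝ] ℝ :=
  TensorProduct.lift ((LinearMap.proj (R := ℝ) (2 : Fin 4)).smulRight
    (TensorProduct.lift ((LinearMap.proj (R := ℝ) (0 : Fin 4)).smulRight
      (LinearMap.proj (R := ℝ) (3 : Fin 4)))))

lemma φ_tmul (a b c : M4) : φ (a ⊗ₜ[ℝ] (b ⊗ₜ[ℝ] c)) = a 2 * (b 0 * c 3) := by
  simp [φ, smul_eq_mul]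

set_option maxHeartbeats 1600000 in
/-- The diagonal tensor product action of a 3-Lie algebra representation
fails in general to be a full representation: there is a 3-Lie algebra (on `Fin 4 → ℝ`)
whose adjoint representations induce a diagonal semi-representation on the tensor cube
which does not satisfy the second Kasymov identity. -/
theorem diagonal_tensor_action_not_full_representation :
    ∃ f : (Fin 4 → ℝ) →ₗ[ℝ] (Fin 4 → ℝ) →ₗ[ℝ] (Fin 4 → ℝ) →ₗ[ℝ] (Fin 4 → ℝ),
      (∀ x y : Fin 4 → ℝ, f x x y = 0) ∧
      (∀ x y : Fin 4 → ℝ, f x y y = 0) ∧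
      (∀ x1 x2 y1 y2 y3 : Fin 4 → ℝ,
        f x1 x2 (f y1 y2 y3) =
          f (f x1 x2 y1) y2 y3 + f y1 (f x1 x2 y2) y3 + f y1 y2 (f x1 x2 y3)) ∧
      ∃ R : (Fin 4 → ℝ) →ₗ[ℝ] (Fin 4 → ℝ) →ₗ[ℝ]
          (((Fin 4 → ℝ) ⊗[ℝ] ((Fin 4 → ℝ) ⊗[ℝ] (Fin 4 → ℝ))) →ₗ[ℝ]
            ((Fin 4 → ℝ) ⊗[ℝ] ((Fin 4 → ℝ) ⊗[ℝ] (Fin 4 → ℝ)))),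
        (∀ x1 x2 v1 v2 v3 : Fin 4 → ℝ,
          R x1 x2 (v1 ⊗ₜ[ℝ] (v2 ⊗ₜ[ℝ] v3)) =
            (f x1 x2 v1) ⊗ₜ[ℝ] (v2 ⊗ₜ[ℝ] v3) + v1 ⊗ₜ[ℝ] ((f x1 x2 v2) ⊗ₜ[ℝ] v3)
              + v1 ⊗ₜ[ℝ] (v2 ⊗ₜ[ℝ] (f x1 x2 v3))) ∧
        ¬ (∀ (x1 y1 y2 y3 : Fin 4 → ℝ)
              (t : (Fin 4 → ℝ) ⊗[ℝ] ((Fin 4 → ℝ) ⊗[ℝ] (Fin 4 → ℝ))),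
            R x1 (f y1 y2 y3) t =
              R y2 y3 (R x1 y1 t) - R y1 y3 (R x1 y2 t) + R y1 y2 (R x1 y3 t)) := by
  refine ⟨trc, ?_, ?_, ?_, Rmap, ?_, ?_⟩
  · intro x y; funext l; fin_cases l <;> simp [cr] <;> ring
  · intro x y; funext l; fin_cases l <;> simp [cr] <;> ring
  · intro x1 x2 y1 y2 y3
    funext l; fin_cases l <;> simp [cr] <;> ring
  · intro x1 x2 v1 v2 v3; rw [Rmap_tmul]; simp
  · intro h
    have h0 := h (![1,0,0,0]) (![0,1,0,0]) (![0,0,1,0]) (![0,0,0,1])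
      ((![1,0,0,0]) ⊗ₜ[ℝ] ((![1,0,0,0]) ⊗ₜ[ℝ] (![0,1,0,0])))
    have h1 := congrArg φ h0
    simp only [trc_apply, Rmap_tmul, map_add, map_sub, φ_tmul] at h1
    simp [cr] at h1
end

section
/- Let A be the 3-dimensional vector space over ℝ with basis e1,e2,e3 and trilinear bracket determined by [e2,e3,e3] = e1, [e3,e3,e3] = e2 (all other basis brackets zero). Then A is a first 3-Leibniz algebra, i.e. [[y1,y2,y3],x2,x3] = [[y1,x2,x3],y2,y3] + [y1,[y2,x2,x3],y3] + [y1,y2,[y3,x2,x3]] for all elements. -/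
/-- The 3-dimensional real trilinear algebra with `[e2,e3,e3] = e1`,
`[e3,e3,e3] = e2` (all other basis brackets zero) is a first 3-Leibniz algebra. -/
theorem example_first_3Leibniz_dim3
    (f : (Fin 3 → ℝ) →ₗ[ℝ] (Fin 3 → ℝ) →ₗ[ℝ] (Fin 3 → ℝ) →ₗ[ℝ] (Fin 3 → ℝ))
    (e : Fin 3 → (Fin 3 → ℝ)) (he : ∀ i : Fin 3, e i = Pi.single i 1)
    (hf : ∀ i j k : Fin 3,
      f (e i) (e j) (e k) =
        if i = 1 ∧ j = 2 ∧ k = 2 then e 0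
        else if i = 2 ∧ j = 2 ∧ k = 2 then e 1
        else 0) :
    ∀ y1 y2 y3 x2 x3 : Fin 3 → ℝ,
      f (f y1 y2 y3) x2 x3 =
        f (f y1 x2 x3) y2 y3 + f y1 (f y2 x2 x3) y3 + f y1 y2 (f y3 x2 x3) := by
  have hbasis : ∀ v : Fin 3 → ℝ, v = v 0 • e 0 + v 1 • e 1 + v 2 • e 2 := by
    intro v
    funext j
    fin_cases j <;> simp [he, Pi.single_apply]
  have hval : ∀ u v w : Fin 3 → ℝ,
      f u v w = (u 1 * v 2 * w 2) • e 0 + (u 2 * v 2 * w 2) • e 1 := by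
    intro u v w
    conv_lhs => rw [hbasis u, hbasis v, hbasis w]
    simp only [map_add, map_smul, LinearMap.add_apply, LinearMap.smul_apply, hf]
    simp only [Fin.isValue, show ((0:Fin 3) = 1) = False by simp [Fin.ext_iff],
      show ((0:Fin 3) = 2) = False by simp [Fin.ext_iff],
      show ((1:Fin 3) = 2) = False by simp [Fin.ext_iff],
      show ((2:Fin 3) = 1) = False by simp [Fin.ext_iff],
      show ((1:Fin 3) = 1) = True by simp,
      show ((2:Fin 3) = 2) = True by simp,
      true_and, false_and, and_false, if_true, if_false, smul_zero]
    module
  have h1 : ∀ u v w : Fin 3 → ℝ, (f u v w) 1 = u 2 * v 2 * w 2 := by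
    intro u v w
    rw [hval]
    simp [he, Pi.single_apply]
  have h2 : ∀ u v w : Fin 3 → ℝ, (f u v w) 2 = 0 := by
    intro u v w
    rw [hval]
    simp [he, Pi.single_apply]
  intro y1 y2 y3 x2 x3
  rw [hval (f y1 y2 y3), hval (f y1 x2 x3), hval y1 (f y2 x2 x3), hval y1 y2 (f y3 x2 x3),
    h1, h2, h1, h2, h2, h2]
  module
end

section
/- Let A be the 3-dimensional real vector space with basis e1,e2,e3 and trilinear bracket determined by [e3,e2,e3] = e2, [e3,e3,e2] = −e2, [e3,e3,e3] = e1 + e2 (all other basis brackets zero). Then A is a first 3-Leibniz algebra. -/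
/-- The 3-dimensional real trilinear algebra with `[e3,e2,e3] = e2`,
`[e3,e3,e2] = -e2`, `[e3,e3,e3] = e1 + e2` (all other basis brackets zero) is a
first 3-Leibniz algebra. -/
theorem example_first_3Leibniz_dim3_second
    (f : (Fin 3 → ℝ) →ₗ[ℝ] (Fin 3 → ℝ) →ₗ[ℝ] (Fin 3 → ℝ) →ₗ[ℝ] (Fin 3 → ℝ))
    (e : Fin 3 → (Fin 3 → ℝ)) (he : ∀ i : Fin 3, e i = Pi.single i 1)
    (hf : ∀ i j k : Fin 3,
      f (e i) (e j) (e k) =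
        if i = 2 ∧ j = 1 ∧ k = 2 then e 1
        else if i = 2 ∧ j = 2 ∧ k = 1 then -(e 1)
        else if i = 2 ∧ j = 2 ∧ k = 2 then e 0 + e 1
        else 0) :
    ∀ y1 y2 y3 x2 x3 : Fin 3 → ℝ,
      f (f y1 y2 y3) x2 x3 =
        f (f y1 x2 x3) y2 y3 + f y1 (f y2 x2 x3) y3 + f y1 y2 (f y3 x2 x3) := by
  have hv : ∀ v : Fin 3 → ℝ, v = ∑ i, v i • e i := by
    intro v
    funext j
    simp [he, Pi.single_apply, Finset.sum_apply, Fin.sum_univ_three]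
  have hform : ∀ a b c : Fin 3 → ℝ, f a b c =
      (a 2 * b 2 * c 2) • e 0 +
      (a 2 * b 1 * c 2 - a 2 * b 2 * c 1 + a 2 * b 2 * c 2) • e 1 := by
    intro a b c
    conv_lhs => rw [hv a, hv b, hv c]
    norm_num
    simp only [hf]
    simp [Fin.sum_univ_three]
    module
  intro y1 y2 y3 x2 x3
  simp only [hform]
  funext t
  fin_cases t <;>
    simp [he, Pi.single_apply, Fin.ext_iff] <;> ring
end

section
/- Let A* be the 3-dimensional real vector space with basis ẽ1,ẽ2,ẽ3 and, for fixed nonzero reals a,b, trilinear bracket determined by [ẽ1,ẽ1,ẽ1] = b·ẽ2 + a·ẽ3 and [ẽ1,ẽ1,ẽ2] = b·ẽ3 (all other basis brackets zero). Then A* is a third 3-Leibniz algebra, i.e. satisfies [x1,x2,[y1,y2,y3]] = [[x1,x2,y1],y2,y3] + [y1,[x1,x2,y2],y3] + [y1,y2,[x1,x2,y3]]. -/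
/-- For nonzero reals `a`, `b`, the 3-dimensional real trilinear algebra
with `[ẽ1,ẽ1,ẽ1] = b·ẽ2 + a·ẽ3` and `[ẽ1,ẽ1,ẽ2] = b·ẽ3` (all other basis brackets
zero) is a third 3-Leibniz algebra. -/
theorem example_third_3Leibniz_dim3
    (a b : ℝ) (ha : a ≠ 0) (hb : b ≠ 0)
    (f : (Fin 3 → ℝ) →ₗ[ℝ] (Fin 3 → ℝ) →ₗ[ℝ] (Fin 3 → ℝ) →ₗ[ℝ] (Fin 3 → ℝ))
    (e : Fin 3 → (Fin 3 → ℝ)) (he : ∀ i : Fin 3, e i = Pi.single i 1)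
    (hf : ∀ i j k : Fin 3,
      f (e i) (e j) (e k) =
        if i = 0 ∧ j = 0 ∧ k = 0 then b • e 1 + a • e 2
        else if i = 0 ∧ j = 0 ∧ k = 1 then b • e 2
        else 0) :
    ∀ x1 x2 y1 y2 y3 : Fin 3 → ℝ,
      f x1 x2 (f y1 y2 y3) =
        f (f x1 x2 y1) y2 y3 + f y1 (f x1 x2 y2) y3 + f y1 y2 (f x1 x2 y3) := by
  have hx : ∀ x : Fin 3 → ℝ, x = x 0 • e 0 + x 1 • e 1 + x 2 • e 2 := by
    intro x
    funext j
    fin_cases j <;> simp [he, Pi.single_apply]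
  have hform : ∀ x y z : Fin 3 → ℝ,
      f x y z = ((x 0 * y 0 * z 0) * b) • e 1
        + ((x 0 * y 0 * z 0) * a + (x 0 * y 0 * z 1) * b) • e 2 := by
    intro x y z
    conv_lhs => rw [hx x, hx y, hx z]
    simp only [map_add, map_smul, LinearMap.add_apply, LinearMap.smul_apply, hf]
    norm_num
    funext j
    fin_cases j <;> simp [he, Pi.single_apply] <;> ring
  intro x1 x2 y1 y2 y3
  have h1 : ∀ x y z : Fin 3 → ℝ, (f x y z) 0 = 0 := by
    intro x y z
    rw [hform x y z]
    simp [he, Pi.single_apply]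
  have h2 : ∀ x y z : Fin 3 → ℝ, (f x y z) 1 = x 0 * y 0 * z 0 * b := by
    intro x y z
    rw [hform x y z]
    simp [he, Pi.single_apply]
  rw [hform x1 x2 (f y1 y2 y3), hform (f x1 x2 y1) y2 y3,
    hform y1 (f x1 x2 y2) y3, hform y1 y2 (f x1 x2 y3), h1, h1, h1, h2]
  funext j
  have h2' := h2 x1 x2 y3
  have h1' := h1 x1 x2 y3
  fin_cases j <;> simp [he, Pi.single_apply, h1', h2']
  exact Or.inl (by ring)
end

section
/- Let (A, γ) be a 3-Lie bialgebra over a field, i.e., A is a finite-dimensional 3-Lie algebra and γ: A → A^{⊗3} is a 1-cocycle (γ[y1,y2,y3] = ad^{(3)}_{(y2,y3,ŷ1)}γ(y1) + ad^{(3)}_{(y3,y1,ŷ2)}γ(y2) + ad^{(3)}_{(y1,y2,ŷ3)}γ(y3)) whose transpose γᵗ: (A*)^{⊗3} → A* defines a 3-Lie bracket on A*. Then, letting μ: A^{⊗3} → A denote the bracket of A, the transpose μᵗ: A* → (A*)^{⊗3} is a 1-cocycle for the 3-Lie algebra A* with respect to its coadjoint-type diagonal action; hence (A*, μᵗ) is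 a 3-Lie bialgebra. -/
open TensorProduct

section Defs

variable {K A : Type*} [Field K] [AddCommGroup A] [Module K A]

/-- The diagonal action `g⊗1⊗1 + 1⊗g⊗1 + 1⊗1⊗g` on `A ⊗ A ⊗ A`. -/
noncomputable def diag3 (g : A →ₗ[K] A) :
    (A ⊗[K] (A ⊗[K] A)) →ₗ[K] (A ⊗[K] (A ⊗[K] A)) :=
  TensorProduct.map g LinearMap.id
    + TensorProduct.map LinearMap.id (TensorProduct.map g LinearMap.id)
    + TensorProduct.map LinearMap.id (TensorProduct.map LinearMap.id g)

/-- Contraction `b ⊗ c ↦ ξ(b) • c`. -/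
noncomputable def cmap (ξ : Module.Dual K A) : (A ⊗[K] A) →ₗ[K] A :=
  TensorProduct.lift ((LinearMap.lsmul K A).comp ξ)

/-- Pairing `b ⊗ c ↦ ξ2(b) * ξ3(c)`. -/
noncomputable def pairD (ξ2 ξ3 : Module.Dual K A) : (A ⊗[K] A) →ₗ[K] K :=
  TensorProduct.lift (ξ2.smulRight ξ3)

/-- The pairing of `ξ1 ⊗ ξ2 ⊗ ξ3` with `A ⊗ A ⊗ A`:
`a ⊗ b ⊗ c ↦ ξ1(a) * ξ2(b) * ξ3(c)`. -/
noncomputable def trip (ξ1 ξ2 ξ3 : Module.Dual K A) :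
    (A ⊗[K] (A ⊗[K] A)) →ₗ[K] K :=
  TensorProduct.lift (ξ1.smulRight (pairD ξ2 ξ3))

/-- Contraction of the first two tensor factors:
`a ⊗ b ⊗ c ↦ ξ2(a) • ξ3(b) • c`. -/
noncomputable def contract2 (ξ2 ξ3 : Module.Dual K A) :
    (A ⊗[K] (A ⊗[K] A)) →ₗ[K] A :=
  TensorProduct.lift (ξ2.smulRight (cmap ξ3))

/-- The bracket on `A*` defined by the cocommutator `γ` via
`⟨[ξ1,ξ2,ξ3]_*, x⟩ = ⟨ξ1 ⊗ ξ2 ⊗ ξ3, γ(x)⟩`. -/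
noncomputable def fstar (γ : A →ₗ[K] A ⊗[K] (A ⊗[K] A))
    (ξ1 ξ2 ξ3 : Module.Dual K A) : Module.Dual K A :=
  (trip ξ1 ξ2 ξ3).comp γ

/-- The transpose of the coadjoint action `η ↦ [ξ2, ξ3, η]_*` on `A*`, i.e. the
map `x ↦ (ξ2 ⊗ ξ3 ⊗ 1)(γ(x))`, satisfying `⟨[ξ2,ξ3,η]_*, x⟩ = ⟨η, coad ξ2 ξ3 x⟩`. -/
noncomputable def coad (γ : A →ₗ[K] A ⊗[K] (A ⊗[K] A))
    (ξ2 ξ3 : Module.Dual K A) : A →ₗ[K] A :=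
  (contract2 ξ2 ξ3).comp γ

end Defs

section Helpers
variable {K A : Type*} [Field K] [AddCommGroup A] [Module K A]

lemma trip_tmul (ξ1 ξ2 ξ3 : Module.Dual K A) (a b c : A) :
    trip ξ1 ξ2 ξ3 (a ⊗ₜ[K] (b ⊗ₜ[K] c)) = ξ1 a * (ξ2 b * ξ3 c) := by
  simp [trip, pairD, smul_eq_mul, mul_assoc]

lemma contract2_tmul (ξ2 ξ3 : Module.Dual K A) (a b c : A) :
    contract2 ξ2 ξ3 (a ⊗ₜ[K] (b ⊗ₜ[K] c)) = ξ2 a • ξ3 b • c := by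
  simp [contract2, cmap]

lemma trip_diag3 (ξ1 ξ2 ξ3 : Module.Dual K A) (g : A →ₗ[K] A)
    (t : A ⊗[K] (A ⊗[K] A)) :
    trip ξ1 ξ2 ξ3 (diag3 g t) =
      trip (ξ1 ∘ₗ g) ξ2 ξ3 t + trip ξ1 (ξ2 ∘ₗ g) ξ3 t + trip ξ1 ξ2 (ξ3 ∘ₗ g) t := by
  have h : (trip ξ1 ξ2 ξ3) ∘ₗ (diag3 g)
      = trip (ξ1 ∘ₗ g) ξ2 ξ3 + trip ξ1 (ξ2 ∘ₗ g) ξ3 + trip ξ1 ξ2 (ξ3 ∘ₗ g) := by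
    ext a b c
    simp [diag3, trip_tmul]
  exact DFunLike.congr_fun h t

lemma apply_contract2 (L ξ2 ξ3 : Module.Dual K A) (t : A ⊗[K] (A ⊗[K] A)) :
    L (contract2 ξ2 ξ3 t) = trip ξ2 ξ3 L t := by
  have h : L ∘ₗ contract2 ξ2 ξ3 = trip ξ2 ξ3 L := by
    ext a b c
    simp [contract2_tmul, trip_tmul]
  exact DFunLike.congr_fun h t

lemma trip_add1 (ξ ξ' ξ2 ξ3 : Module.Dual K A) :
    trip (ξ + ξ') ξ2 ξ3 = trip ξ ξ2 ξ3 + trip ξ' ξ2 ξ3 := by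
  ext a b c; simp [trip_tmul]; ring

lemma trip_add2 (ξ1 ξ ξ' ξ3 : Module.Dual K A) :
    trip ξ1 (ξ + ξ') ξ3 = trip ξ1 ξ ξ3 + trip ξ1 ξ' ξ3 := by
  ext a b c; simp [trip_tmul]; ring

lemma trip_add3 (ξ1 ξ2 ξ ξ' : Module.Dual K A) :
    trip ξ1 ξ2 (ξ + ξ') = trip ξ1 ξ2 ξ + trip ξ1 ξ2 ξ' := by
  ext a b c; simp [trip_tmul]; ring

end Helpers
/-- If `(A, γ)` is a finite-dimensional 3-Lie bialgebra (with `γ` a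
1-cocycle whose transpose defines a 3-Lie bracket `fstar γ` on `A*`), then the
transpose `μᵗ` of the bracket `μ = f` of `A` is a 1-cocycle for the 3-Lie algebra
`A*` with respect to the coadjoint-type diagonal action; i.e. `(A*, μᵗ)` is a
3-Lie bialgebra.  The conclusion is the dual 1-cocycle condition expressed through
the natural pairing with `x1 ⊗ x2 ⊗ x3`. -/
theorem dual_of_3Lie_bialgebra
    {K A : Type*} [Field K] [AddCommGroup A] [Module K A] [FiniteDimensional K A]
    (f : A →ₗ[K] A →ₗ[K] A →ₗ[K] A)
    (halt1 : ∀ x y : A, f x x y = 0)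
    (halt2 : ∀ x y : A, f x y y = 0)
    (hfil : ∀ x1 x2 y1 y2 y3 : A,
      f x1 x2 (f y1 y2 y3) =
        f (f x1 x2 y1) y2 y3 + f y1 (f x1 x2 y2) y3 + f y1 y2 (f x1 x2 y3))
    (γ : A →ₗ[K] A ⊗[K] (A ⊗[K] A))
    (hcoc : ∀ y1 y2 y3 : A,
      γ (f y1 y2 y3) =
        diag3 (f y2 y3) (γ y1) + diag3 (f y3 y1) (γ y2) + diag3 (f y1 y2) (γ y3))
    (hsalt1 : ∀ ξ η : Module.Dual K A, fstar γ ξ ξ η = 0)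
    (hsalt2 : ∀ ξ η : Module.Dual K A, fstar γ ξ η η = 0)
    (hsfil : ∀ ξ1 ξ2 η1 η2 η3 : Module.Dual K A,
      fstar γ ξ1 ξ2 (fstar γ η1 η2 η3) =
        fstar γ (fstar γ ξ1 ξ2 η1) η2 η3 + fstar γ η1 (fstar γ ξ1 ξ2 η2) η3
          + fstar γ η1 η2 (fstar γ ξ1 ξ2 η3)) :
    ∀ (ξ1 ξ2 ξ3 : Module.Dual K A) (x1 x2 x3 : A),
      fstar γ ξ1 ξ2 ξ3 (f x1 x2 x3) =
        (ξ1 (f (coad γ ξ2 ξ3 x1) x2 x3) + ξ1 (f x1 (coad γ ξ2 ξ3 x2) x3)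
            + ξ1 (f x1 x2 (coad γ ξ2 ξ3 x3)))
        + (ξ2 (f (coad γ ξ3 ξ1 x1) x2 x3) + ξ2 (f x1 (coad γ ξ3 ξ1 x2) x3)
            + ξ2 (f x1 x2 (coad γ ξ3 ξ1 x3)))
        + (ξ3 (f (coad γ ξ1 ξ2 x1) x2 x3) + ξ3 (f x1 (coad γ ξ1 ξ2 x2) x3)
            + ξ3 (f x1 x2 (coad γ ξ1 ξ2 x3))) := by

  intro ξ1 ξ2 ξ3 x1 x2 x3
  -- f is skew-symmetric, hence cyclic
  have hsk12 : ∀ a b c : A, f a b c = - f b a c := by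
    intro a b c
    have h := halt1 (a + b) c
    simp only [map_add, LinearMap.add_apply, halt1, zero_add, add_zero] at h
    first
    | exact eq_neg_of_add_eq_zero_left h
    | exact eq_neg_of_add_eq_zero_right h
  have hsk23 : ∀ a b c : A, f a b c = - f a c b := by
    intro a b c
    have h := halt2 a (b + c)
    simp only [map_add, LinearMap.add_apply, halt2, zero_add, add_zero] at h
    first
    | exact eq_neg_of_add_eq_zero_left h
    | exact eq_neg_of_add_eq_zero_right h
  have hcyc : ∀ a b c : A, f a b c = f b c a := by
    intro a b c
    rw [hsk12 a b c, hsk23 b a c, neg_neg]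
  -- trip is alternating on the image of γ
  have tAlt1 : ∀ (ξ η : Module.Dual K A) (x : A), trip ξ ξ η (γ x) = 0 := by
    intro ξ η x
    have := DFunLike.congr_fun (hsalt1 ξ η) x
    simpa [fstar] using this
  have tAlt2 : ∀ (ξ η : Module.Dual K A) (x : A), trip ξ η η (γ x) = 0 := by
    intro ξ η x
    have := DFunLike.congr_fun (hsalt2 ξ η) x
    simpa [fstar] using this
  have tsk12 : ∀ (a b c : Module.Dual K A) (x : A),
      trip a b c (γ x) = - trip b a c (γ x) := by
    intro a b c x
    have h := tAlt1 (a + b) c x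
    rw [trip_add1, trip_add2, trip_add2] at h
    simp only [LinearMap.add_apply, tAlt1, zero_add, add_zero] at h
    first
    | exact eq_neg_of_add_eq_zero_left h
    | exact eq_neg_of_add_eq_zero_right h
  have tsk23 : ∀ (a b c : Module.Dual K A) (x : A),
      trip a b c (γ x) = - trip a c b (γ x) := by
    intro a b c x
    have h := tAlt2 a (b + c) x
    rw [trip_add2, trip_add3, trip_add3] at h
    simp only [LinearMap.add_apply, tAlt2, zero_add, add_zero] at h
    first
    | exact eq_neg_of_add_eq_zero_left h
    | exact eq_neg_of_add_eq_zero_right h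
  have tcyc : ∀ (a b c : Module.Dual K A) (x : A),
      trip a b c (γ x) = trip b c a (γ x) := by
    intro a b c x
    rw [tsk12 a b c x, tsk23 b a c x, neg_neg]
  -- evaluating a functional on coad
  have coadEval : ∀ (L ζ2 ζ3 : Module.Dual K A) (x : A),
      L (coad γ ζ2 ζ3 x) = trip L ζ2 ζ3 (γ x) := by
    intro L ζ2 ζ3 x
    rw [show (coad γ ζ2 ζ3) x = contract2 ζ2 ζ3 (γ x) from rfl, apply_contract2]
    exact (tcyc L ζ2 ζ3 x).symm
  -- rewrite each right-hand term
  have r11 : ξ1 (f (coad γ ξ2 ξ3 x1) x2 x3)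
      = trip (ξ1 ∘ₗ (f x2 x3)) ξ2 ξ3 (γ x1) := by
    have e := coadEval (ξ1 ∘ₗ (f x2 x3)) ξ2 ξ3 x1
    simp only [LinearMap.comp_apply] at e
    rw [hcyc (coad γ ξ2 ξ3 x1) x2 x3, e]
  have r12 : ξ1 (f x1 (coad γ ξ2 ξ3 x2) x3)
      = trip (ξ1 ∘ₗ (f x3 x1)) ξ2 ξ3 (γ x2) := by
    have e := coadEval (ξ1 ∘ₗ (f x3 x1)) ξ2 ξ3 x2
    simp only [LinearMap.comp_apply] at e
    rw [hcyc x1 (coad γ ξ2 ξ3 x2) x3, hcyc (coad γ ξ2 ξ3 x2) x3 x1, e]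
  have r13 : ξ1 (f x1 x2 (coad γ ξ2 ξ3 x3))
      = trip (ξ1 ∘ₗ (f x1 x2)) ξ2 ξ3 (γ x3) := by
    have e := coadEval (ξ1 ∘ₗ (f x1 x2)) ξ2 ξ3 x3
    simp only [LinearMap.comp_apply] at e
    rw [e]
  have r21 : ξ2 (f (coad γ ξ3 ξ1 x1) x2 x3)
      = trip ξ1 (ξ2 ∘ₗ (f x2 x3)) ξ3 (γ x1) := by
    have e := coadEval (ξ2 ∘ₗ (f x2 x3)) ξ3 ξ1 x1
    simp only [LinearMap.comp_apply] at e
    rw [hcyc (coad γ ξ3 ξ1 x1) x2 x3, e]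
    exact (tcyc ξ1 (ξ2 ∘ₗ (f x2 x3)) ξ3 x1).symm
  have r22 : ξ2 (f x1 (coad γ ξ3 ξ1 x2) x3)
      = trip ξ1 (ξ2 ∘ₗ (f x3 x1)) ξ3 (γ x2) := by
    have e := coadEval (ξ2 ∘ₗ (f x3 x1)) ξ3 ξ1 x2
    simp only [LinearMap.comp_apply] at e
    rw [hcyc x1 (coad γ ξ3 ξ1 x2) x3, hcyc (coad γ ξ3 ξ1 x2) x3 x1, e]
    exact (tcyc ξ1 (ξ2 ∘ₗ (f x3 x1)) ξ3 x2).symm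
  have r23 : ξ2 (f x1 x2 (coad γ ξ3 ξ1 x3))
      = trip ξ1 (ξ2 ∘ₗ (f x1 x2)) ξ3 (γ x3) := by
    have e := coadEval (ξ2 ∘ₗ (f x1 x2)) ξ3 ξ1 x3
    simp only [LinearMap.comp_apply] at e
    rw [e]
    exact (tcyc ξ1 (ξ2 ∘ₗ (f x1 x2)) ξ3 x3).symm
  have r31 : ξ3 (f (coad γ ξ1 ξ2 x1) x2 x3)
      = trip ξ1 ξ2 (ξ3 ∘ₗ (f x2 x3)) (γ x1) := by
    have e := coadEval (ξ3 ∘ₗ (f x2 x3)) ξ1 ξ2 x1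
    simp only [LinearMap.comp_apply] at e
    rw [hcyc (coad γ ξ1 ξ2 x1) x2 x3, e, tcyc]
  have r32 : ξ3 (f x1 (coad γ ξ1 ξ2 x2) x3)
      = trip ξ1 ξ2 (ξ3 ∘ₗ (f x3 x1)) (γ x2) := by
    have e := coadEval (ξ3 ∘ₗ (f x3 x1)) ξ1 ξ2 x2
    simp only [LinearMap.comp_apply] at e
    rw [hcyc x1 (coad γ ξ1 ξ2 x2) x3, hcyc (coad γ ξ1 ξ2 x2) x3 x1, e, tcyc]
  have r33 : ξ3 (f x1 x2 (coad γ ξ1 ξ2 x3))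
      = trip ξ1 ξ2 (ξ3 ∘ₗ (f x1 x2)) (γ x3) := by
    have e := coadEval (ξ3 ∘ₗ (f x1 x2)) ξ1 ξ2 x3
    simp only [LinearMap.comp_apply] at e
    rw [e, tcyc]
  -- expand the left-hand side via the cocycle condition
  have lhs : fstar γ ξ1 ξ2 ξ3 (f x1 x2 x3)
      = (trip (ξ1 ∘ₗ (f x2 x3)) ξ2 ξ3 (γ x1) + trip ξ1 (ξ2 ∘ₗ (f x2 x3)) ξ3 (γ x1)
          + trip ξ1 ξ2 (ξ3 ∘ₗ (f x2 x3)) (γ x1))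
        + (trip (ξ1 ∘ₗ (f x3 x1)) ξ2 ξ3 (γ x2) + trip ξ1 (ξ2 ∘ₗ (f x3 x1)) ξ3 (γ x2)
          + trip ξ1 ξ2 (ξ3 ∘ₗ (f x3 x1)) (γ x2))
        + (trip (ξ1 ∘ₗ (f x1 x2)) ξ2 ξ3 (γ x3) + trip ξ1 (ξ2 ∘ₗ (f x1 x2)) ξ3 (γ x3)
          + trip ξ1 ξ2 (ξ3 ∘ₗ (f x1 x2)) (γ x3)) := by
    have e0 : fstar γ ξ1 ξ2 ξ3 (f x1 x2 x3) = trip ξ1 ξ2 ξ3 (γ (f x1 x2 x3)) := rfl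
    rw [e0, hcoc x1 x2 x3, map_add, map_add, trip_diag3, trip_diag3, trip_diag3]
  rw [lhs, r11, r12, r13, r21, r22, r23, r31, r32, r33]
  ring
end
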